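/- For every $\gamma > 0$, there exists a constant $c$ such that for all sufficiently large $n$ and all $m$ with $1 \ll m \le n^2/4$: the number of split graphs on vertex set $\{1,\dots,n\}$ with exactly $m$ edges is at least $N_{n,m}(\ell)$ for $\ell = \lceil \sqrt{m/\log(n^2/m)} \rceil$, and this quantity satisfies $N_{n,m}(\ell) \ge \left(\frac{c\, n}{\sqrt{m \log(n^2/m)}}\right)^m$ whenever $m \le \lambda n^2$ for a sufficiently small absolute constant $\lambda$. -/

import Mathlib

lemma pow_le_choose_mul : ∀ (b a : ℕ), b ≤ a → a ^ b ≤ b ^ b * a.choose b := by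
  intro b
  induction b with
  | zero => simp
  | succ b ih =>
    intro a hba
    obtain ⟨a', rfl⟩ : ∃ a', a = a' + 1 := ⟨a - 1, by omega⟩
    have hb : b ≤ a' := by omega
    have hpos : 0 < b ^ b := by
      rcases Nat.eq_zero_or_pos b with h | h
      · simp [h]
      · exact Nat.pow_pos h
    have key : (a' + 1) ^ b ≤ (b + 1) ^ b * a'.choose b := by
      refine Nat.le_of_mul_le_mul_left ?_ hpos
      calc b ^ b * (a' + 1) ^ b = ((a' + 1) * b) ^ b := by rw [mul_pow]; ring
        _ ≤ ((b + 1) * a') ^ b := Nat.pow_le_pow_left (by nlinarith) b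
        _ = (b + 1) ^ b * a' ^ b := by rw [mul_pow]
        _ ≤ (b + 1) ^ b * (b ^ b * a'.choose b) := Nat.mul_le_mul_left _ (ih a' hb)
        _ = b ^ b * ((b + 1) ^ b * a'.choose b) := by ring
    have id1 : (a' + 1) * a'.choose b = (a' + 1).choose (b + 1) * (b + 1) :=
      Nat.add_one_mul_choose_eq a' b
    calc (a' + 1) ^ (b + 1) = (a' + 1) ^ b * (a' + 1) := pow_succ _ _
      _ ≤ (b + 1) ^ b * a'.choose b * (a' + 1) := Nat.mul_le_mul_right _ key
      _ = (b + 1) ^ b * ((a' + 1) * a'.choose b) := by ring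
      _ = (b + 1) ^ b * ((a' + 1).choose (b + 1) * (b + 1)) := by rw [id1]
      _ = (b + 1) ^ (b + 1) * (a' + 1).choose (b + 1) := by ring

lemma div_pow_le_choose (a b : ℕ) (h : b ≤ a) : ((a : ℝ) / b) ^ b ≤ a.choose b := by
  rcases Nat.eq_zero_or_pos b with hb | hb
  · simp [hb]
  have hb0 : (0 : ℝ) < (b : ℝ) ^ b := by positivity
  rw [div_pow, div_le_iff₀ hb0]
  have := pow_le_choose_mul b a h
  have : ((a : ℝ)) ^ b ≤ (b : ℝ) ^ b * a.choose b := by exact_mod_cast this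
  linarith


/-- An independent set: no two of its vertices are adjacent. -/
def SimpleGraph.IsIndepSet' {V : Type*} (G : SimpleGraph V) (s : Set V) : Prop :=
  ∀ ⦃v⦄, v ∈ s → ∀ ⦃w⦄, w ∈ s → ¬ G.Adj v w

/-- A split graph: the vertex set partitions into a clique and an independent set. -/
def SimpleGraph.IsSplit {V : Type*} (G : SimpleGraph V) : Prop :=
  ∃ K : Set V, G.IsClique K ∧ G.IsIndepSet' Kᶜ

/-- `N n m ℓ`: the number of graphs on `{0,…,n-1}` with exactly `m` edges that are complete
on the first `ℓ` vertices and empty on the remaining `n - ℓ` vertices. -/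
noncomputable def Nsplit (n m ℓ : ℕ) : ℕ :=
  Nat.card {G : SimpleGraph (Fin n) // G.edgeSet.ncard = m ∧
    (∀ v w : Fin n, (v : ℕ) < ℓ → (w : ℕ) < ℓ → v ≠ w → G.Adj v w) ∧
    (∀ v w : Fin n, ℓ ≤ (v : ℕ) → ℓ ≤ (w : ℕ) → ¬ G.Adj v w)}

/-- `Scard n m`: the number of split graphs on `{0,…,n-1}` with exactly `m` edges. -/
noncomputable def Scard (n m : ℕ) : ℕ :=
  Nat.card {G : SimpleGraph (Fin n) // G.IsSplit ∧ G.edgeSet.ncard = m}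

open Finset in
lemma nsplit_le_scard (n m ℓ : ℕ) : Nsplit n m ℓ ≤ Scard n m := by
  apply Nat.card_le_card_of_injective
    (f := fun G : {G : SimpleGraph (Fin n) // G.edgeSet.ncard = m ∧
        (∀ v w : Fin n, (v : ℕ) < ℓ → (w : ℕ) < ℓ → v ≠ w → G.Adj v w) ∧
        (∀ v w : Fin n, ℓ ≤ (v : ℕ) → ℓ ≤ (w : ℕ) → ¬ G.Adj v w)} =>
      (⟨G.1, ⟨⟨{v : Fin n | (v : ℕ) < ℓ}, fun v hv w hw hne => G.2.2.1 v w hv hw hne,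
        fun v hv w hw => G.2.2.2 v w (not_lt.1 hv) (not_lt.1 hw)⟩, G.2.1⟩⟩ :
        {G : SimpleGraph (Fin n) // G.IsSplit ∧ G.edgeSet.ncard = m}))
  intro G1 G2 h
  simp only [Subtype.mk.injEq] at h
  exact Subtype.ext h




def mkSplitGraph (n ℓ : ℕ) (S : Finset (Fin n × Fin n)) : SimpleGraph (Fin n) where
  Adj v w := v ≠ w ∧ (((v : ℕ) < ℓ ∧ (w : ℕ) < ℓ) ∨ (v, w) ∈ S ∨ (w, v) ∈ S)
  symm := by
    constructor
    intro v w h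
    refine ⟨h.1.symm, ?_⟩
    rcases h.2 with ⟨h1, h2⟩ | h1 | h1
    · exact Or.inl ⟨h2, h1⟩
    · exact Or.inr (Or.inr h1)
    · exact Or.inr (Or.inl h1)
  loopless := ⟨fun v h => h.1 rfl⟩

@[simp] lemma mkSplitGraph_adj (n ℓ : ℕ) (S : Finset (Fin n × Fin n)) (v w : Fin n) :
    (mkSplitGraph n ℓ S).Adj v w ↔
      v ≠ w ∧ (((v : ℕ) < ℓ ∧ (w : ℕ) < ℓ) ∨ (v, w) ∈ S ∨ (w, v) ∈ S) := Iff.rfl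

open Finset in
lemma Nsplit_eq (n m ℓ : ℕ) (hℓn : ℓ ≤ n) (hcm : ℓ.choose 2 ≤ m) :
    Nsplit n m ℓ = (ℓ * (n - ℓ)).choose (m - ℓ.choose 2) := by
  classical
  set b := m - ℓ.choose 2 with hbdef
  -- the sets of vertices and pairs
  set A : Finset (Fin n) := univ.filter (fun v => (v : ℕ) < ℓ) with hAdef
  set B : Finset (Fin n) := univ.filter (fun v => ℓ ≤ (v : ℕ)) with hBdef
  set crossP : Finset (Fin n × Fin n) := A ×ˢ B with hcrossdef
  set cliqueP : Finset (Fin n × Fin n) :=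
    univ.filter (fun p => (p.1 : ℕ) < (p.2 : ℕ) ∧ (p.2 : ℕ) < ℓ) with hcliquedef
  have hlt : ∀ k : ℕ, k ≤ n → (univ.filter (fun v : Fin n => (v : ℕ) < k)).card = k := by
    intro k hk
    have e : (univ.filter (fun v : Fin n => (v : ℕ) < k)) = (univ : Finset (Fin k)).map
        ⟨fun i => (⟨i.1, i.2.trans_le hk⟩ : Fin n), fun i j hij => by
          simpa [Fin.ext_iff] using congrArg Fin.val hij⟩ := by
      ext v
      simp only [mem_filter, mem_univ, true_and, mem_map, Function.Embedding.coeFn_mk]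
      constructor
      · intro hv; exact ⟨⟨v.1, hv⟩, rfl⟩
      · rintro ⟨i, rfl⟩; exact i.2
    rw [e, card_map, card_univ, Fintype.card_fin]
  have hA : A.card = ℓ := hlt ℓ hℓn
  have hB : B.card = n - ℓ := by
    have hBc : B = Aᶜ := by
      ext v
      simp [hAdef, hBdef, Nat.not_lt]
    rw [hBc, card_compl, hA, Fintype.card_fin]
  have hcross : crossP.card = ℓ * (n - ℓ) := by
    rw [hcrossdef, card_product, hA, hB]
  -- cardinality of the clique pairs
  have hclique : cliqueP.card = ℓ.choose 2 := by
    have hfib : ∀ p ∈ cliqueP, p.2 ∈ A := by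
      intro p hp
      simp only [hcliquedef, mem_filter, mem_univ, true_and] at hp
      simp only [hAdef, mem_filter, mem_univ, true_and]
      exact hp.2
    rw [card_eq_sum_card_fiberwise hfib]
    have hfiber : ∀ w ∈ A, (cliqueP.filter (fun p => p.2 = w)).card = (w : ℕ) := by
      intro w hw
      have e : cliqueP.filter (fun p => p.2 = w)
          = (univ.filter (fun v : Fin n => (v : ℕ) < (w : ℕ))) ×ˢ {w} := by
        ext p
        simp only [hcliquedef, mem_filter, mem_univ, true_and, mem_product, mem_singleton]
        constructor
        · rintro ⟨⟨h1, _⟩, h3⟩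
          exact ⟨by rw [← h3]; exact h1, h3⟩
        · rintro ⟨h1, h2⟩
          simp only [hAdef, mem_filter, mem_univ, true_and] at hw
          exact ⟨⟨by rw [h2]; exact h1, by rw [h2]; exact hw⟩, h2⟩
      rw [e, card_product, card_singleton, mul_one, hlt _ (le_of_lt w.2)]
    rw [Finset.sum_congr rfl hfiber]
    -- ∑ w ∈ A, (w : ℕ) = ℓ.choose 2
    have hAmap : A = (univ : Finset (Fin ℓ)).map
        ⟨fun i => (⟨i.1, i.2.trans_le hℓn⟩ : Fin n), fun i j hij => by
          simpa [Fin.ext_iff] using congrArg Fin.val hij⟩ := by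
      ext v
      simp only [hAdef, mem_filter, mem_univ, true_and, mem_map, Function.Embedding.coeFn_mk]
      constructor
      · intro hv; exact ⟨⟨v.1, hv⟩, rfl⟩
      · rintro ⟨i, rfl⟩; exact i.2
    rw [hAmap, sum_map]
    show ∑ i : Fin ℓ, (i : ℕ) = ℓ.choose 2
    rw [Fin.sum_univ_eq_sum_range (fun i => i) ℓ]
    have h2 := Finset.sum_range_id_mul_two ℓ
    have h3 : ℓ.choose 2 * 2 = ℓ * (ℓ - 1) := by
      rw [Nat.choose_two_right]
      rcases Nat.even_mul_pred_self ℓ with ⟨t, ht⟩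
      omega
    omega
  have hcrossmem : ∀ p : Fin n × Fin n, p ∈ crossP ↔ ((p.1 : ℕ) < ℓ ∧ ℓ ≤ (p.2 : ℕ)) := by
    intro p
    simp [hcrossdef, hAdef, hBdef, mem_product]
  -- the edge count of any graph with the structure
  have edgecard : ∀ G : SimpleGraph (Fin n),
      (∀ v w : Fin n, (v : ℕ) < ℓ → (w : ℕ) < ℓ → v ≠ w → G.Adj v w) →
      (∀ v w : Fin n, ℓ ≤ (v : ℕ) → ℓ ≤ (w : ℕ) → ¬ G.Adj v w) →
      G.edgeSet.ncard = ℓ.choose 2 + (crossP.filter (fun p => G.Adj p.1 p.2)).card := by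
    intro G hlo hhi
    set S := crossP.filter (fun p => G.Adj p.1 p.2) with hS
    set T := cliqueP ∪ S with hT
    have hTlt : ∀ p ∈ T, (p.1 : ℕ) < (p.2 : ℕ) := by
      intro p hp
      rcases mem_union.1 hp with h | h
      · exact (mem_filter.1 h).2.1
      · have h1 := (hcrossmem p).1 (mem_filter.1 h).1
        omega
    have himage : G.edgeFinset = T.image (fun p => s(p.1, p.2)) := by
      ext e
      induction e with
      | _ v w =>
        rw [SimpleGraph.mem_edgeFinset, SimpleGraph.mem_edgeSet]
        constructor
        · intro he
          have hvw : v ≠ w := G.ne_of_adj he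
          have hvw' : (v : ℕ) ≠ (w : ℕ) := fun h => hvw (Fin.ext h)
          rcases lt_or_ge (v : ℕ) ℓ with hv | hv
          · rcases lt_or_ge (w : ℕ) ℓ with hw | hw
            · rcases Nat.lt_or_ge (v : ℕ) (w : ℕ) with h | h
              · exact mem_image.2 ⟨(v, w), mem_union.2 (Or.inl (by
                  simp only [hcliquedef, mem_filter, mem_univ, true_and]; exact ⟨h, hw⟩)), rfl⟩
              · exact mem_image.2 ⟨(w, v), mem_union.2 (Or.inl (by
                  simp only [hcliquedef, mem_filter, mem_univ, true_and]
                  exact ⟨by omega, hv⟩)), by simp [Sym2.eq_swap]⟩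
            · exact mem_image.2 ⟨(v, w), mem_union.2 (Or.inr (by
                rw [hS, mem_filter]; exact ⟨(hcrossmem _).2 ⟨hv, hw⟩, he⟩)), rfl⟩
          · rcases lt_or_ge (w : ℕ) ℓ with hw | hw
            · exact mem_image.2 ⟨(w, v), mem_union.2 (Or.inr (by
                rw [hS, mem_filter]; exact ⟨(hcrossmem _).2 ⟨hw, hv⟩, he.symm⟩)), by
                simp [Sym2.eq_swap]⟩
            · exact absurd he (hhi v w hv hw)
        · intro he
          rcases mem_image.1 he with ⟨p, hp, hpe⟩
          have hadj : G.Adj p.1 p.2 := by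
            rcases mem_union.1 hp with h | h
            · have h' := (mem_filter.1 h).2
              exact hlo _ _ (lt_trans h'.1 h'.2) h'.2 (fun hh => by
                have := congrArg Fin.val hh; omega)
            · exact (mem_filter.1 h).2
          rcases Sym2.eq_iff.1 hpe with ⟨h1, h2⟩ | ⟨h1, h2⟩
          · rw [← h1, ← h2]; exact hadj
          · rw [← h1, ← h2]; exact hadj.symm
    have hinj : Set.InjOn (fun p : Fin n × Fin n => s(p.1, p.2)) T := by
      intro p hp q hq hpq
      simp only at hpq
      rcases Sym2.eq_iff.1 hpq with ⟨h1, h2⟩ | ⟨h1, h2⟩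
      · exact Prod.ext h1 h2
      · exfalso
        have l1 := hTlt p hp
        have l2 := hTlt q hq
        have e1 := congrArg Fin.val h1
        have e2 := congrArg Fin.val h2
        omega
    have hdisj : Disjoint cliqueP S := by
      rw [Finset.disjoint_left]
      intro p hp hps
      have h2 := (mem_filter.1 hp).2.2
      have h3 := (hcrossmem p).1 (mem_filter.1 hps).1
      omega
    calc G.edgeSet.ncard = G.edgeFinset.card := by
          rw [← Set.ncard_coe_finset, SimpleGraph.coe_edgeFinset]
      _ = (T.image (fun p => s(p.1, p.2))).card := by rw [himage]
      _ = T.card := card_image_of_injOn hinj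
      _ = cliqueP.card + S.card := card_union_of_disjoint hdisj
      _ = ℓ.choose 2 + S.card := by rw [hclique]
  have hfilt : ∀ S : Finset (Fin n × Fin n), S ⊆ crossP →
      crossP.filter (fun p => (mkSplitGraph n ℓ S).Adj p.1 p.2) = S := by
    intro S hsub
    ext p
    rw [mem_filter]
    simp only [mkSplitGraph_adj]
    constructor
    · rintro ⟨hpc, _, hcase⟩
      have hc := (hcrossmem p).1 hpc
      rcases hcase with ⟨_, h2⟩ | h | h
      · omega
      · exact h
      · exfalso
        have := (hcrossmem _).1 (hsub h)
        dsimp only at this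
        omega
    · intro hp
      have hc := (hcrossmem p).1 (hsub hp)
      exact ⟨hsub hp, fun h => by have := congrArg Fin.val h; omega, Or.inr (Or.inl hp)⟩
  have e : {G : SimpleGraph (Fin n) // G.edgeSet.ncard = m ∧
      (∀ v w : Fin n, (v : ℕ) < ℓ → (w : ℕ) < ℓ → v ≠ w → G.Adj v w) ∧
      (∀ v w : Fin n, ℓ ≤ (v : ℕ) → ℓ ≤ (w : ℕ) → ¬ G.Adj v w)} ≃
      {S : Finset (Fin n × Fin n) // S ∈ Finset.powersetCard b crossP} := by
    have hP2 : ∀ S : Finset (Fin n × Fin n),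
        ∀ v w : Fin n, (v : ℕ) < ℓ → (w : ℕ) < ℓ → v ≠ w → (mkSplitGraph n ℓ S).Adj v w :=
      fun S v w hv hw hne => ⟨hne, Or.inl ⟨hv, hw⟩⟩
    have hP3 : ∀ S : Finset (Fin n × Fin n), S ⊆ crossP →
        ∀ v w : Fin n, ℓ ≤ (v : ℕ) → ℓ ≤ (w : ℕ) → ¬ (mkSplitGraph n ℓ S).Adj v w := by
      intro S hsub v w hv hw h
      rcases h.2 with ⟨h1, _⟩ | h1 | h1
      · omega
      · have := (hcrossmem _).1 (hsub h1); dsimp only at this; omega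
      · have := (hcrossmem _).1 (hsub h1); dsimp only at this; omega
    refine ⟨fun G => ⟨crossP.filter (fun p => G.1.Adj p.1 p.2), ?_⟩,
      fun S => ⟨mkSplitGraph n ℓ S.1, ?_, hP2 S.1, hP3 S.1 (mem_powersetCard.1 S.2).1⟩, ?_, ?_⟩
    · rw [mem_powersetCard]
      refine ⟨filter_subset _ _, ?_⟩
      have h1 := edgecard G.1 G.2.2.1 G.2.2.2
      have h2 := G.2.1
      omega
    · have hsub : S.1 ⊆ crossP := (mem_powersetCard.1 S.2).1
      have hcard : S.1.card = b := (mem_powersetCard.1 S.2).2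
      have hec := edgecard (mkSplitGraph n ℓ S.1) (hP2 S.1) (hP3 S.1 hsub)
      rw [hfilt S.1 hsub] at hec
      omega
    · intro G
      apply Subtype.ext
      ext v w
      simp only [mkSplitGraph_adj, mem_filter]
      constructor
      · rintro ⟨hne, hcase⟩
        rcases hcase with ⟨hv, hw⟩ | h | h
        · exact G.2.2.1 v w hv hw hne
        · exact h.2
        · exact (h.2).symm
      · intro hadj
        refine ⟨G.1.ne_of_adj hadj, ?_⟩
        rcases lt_or_ge (v : ℕ) ℓ with hv | hv
        · rcases lt_or_ge (w : ℕ) ℓ with hw | hw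
          · exact Or.inl ⟨hv, hw⟩
          · exact Or.inr (Or.inl ⟨(hcrossmem _).2 ⟨hv, hw⟩, hadj⟩)
        · rcases lt_or_ge (w : ℕ) ℓ with hw | hw
          · exact Or.inr (Or.inr ⟨(hcrossmem _).2 ⟨hw, hv⟩, hadj.symm⟩)
          · exact absurd hadj (G.2.2.2 v w hv hw)
    · intro S
      apply Subtype.ext
      exact hfilt S.1 (mem_powersetCard.1 S.2).1
  rw [Nsplit, Nat.card_congr e, Nat.card_eq_finsetCard, card_powersetCard, hcross]


set_option maxHeartbeats 2000000 in
/-- For every `γ > 0` there is a constant `c > 0` such that for all sufficiently large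
`n` and all sufficiently large `m ≤ n²/4`: the number of split graphs on `{1,…,n}` with
`m` edges is at least `N_{n,m}(ℓ)` for `ℓ = ⌈√(m / log(n²/m))⌉`, and moreover
`N_{n,m}(ℓ) ≥ (c n / √(m log(n²/m)))^m` whenever `m ≤ λ n²` for a sufficiently small
absolute constant `λ > 0`. -/
theorem split_count_lower_bound (γ : ℝ) (hγ : 0 < γ) :
    ∃ c : ℝ, 0 < c ∧ ∃ lam : ℝ, 0 < lam ∧ ∃ N : ℕ, ∀ n : ℕ, N ≤ n → ∀ m : ℕ, N ≤ m →
      (m : ℝ) ≤ (n : ℝ) ^ 2 / 4 → (m : ℝ) ≤ lam * (n : ℝ) ^ 2 →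
      (Scard n m : ℝ) ≥
          (Nsplit n m ⌈Real.sqrt ((m : ℝ) / Real.log ((n : ℝ) ^ 2 / m))⌉₊ : ℝ) ∧
      (Nsplit n m ⌈Real.sqrt ((m : ℝ) / Real.log ((n : ℝ) ^ 2 / m))⌉₊ : ℝ) ≥
          (c * n / Real.sqrt (m * Real.log ((n : ℝ) ^ 2 / m))) ^ m := by
  refine ⟨1/6, by norm_num, Real.exp (-16), Real.exp_pos _, 100, ?_⟩
  intro n hn m hm hm4 hmlam
  have hn0 : (0 : ℝ) < n := by
    have : (0:ℕ) < n := by omega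
    exact_mod_cast this
  have hm0 : (0 : ℝ) < m := by
    have : (0:ℕ) < m := by omega
    exact_mod_cast this
  have hm100 : (100 : ℝ) ≤ m := by exact_mod_cast hm
  have hn100 : (100 : ℝ) ≤ n := by exact_mod_cast hn
  set u : ℝ := (n : ℝ) ^ 2 / m with hudef
  set L : ℝ := Real.log u with hLdef
  set ℓ : ℕ := ⌈Real.sqrt ((m : ℝ) / L)⌉₊ with hldef
  set s : ℝ := Real.sqrt ((m : ℝ) * L) with hsdef
  have hE : Real.exp (-16) * Real.exp 16 = 1 := by
    rw [← Real.exp_add]; norm_num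
  have hu16 : Real.exp 16 ≤ u := by
    rw [hudef, le_div_iff₀ hm0]
    have hEn : Real.exp 16 * (Real.exp (-16) * (n:ℝ)^2) = (n:ℝ)^2 := by
      rw [← mul_assoc, mul_comm (Real.exp 16) (Real.exp (-16)), hE, one_mul]
    have h7 := mul_le_mul_of_nonneg_left hmlam (Real.exp_pos 16).le
    linarith only [hEn, h7]
  have hu0 : (0 : ℝ) < u := lt_of_lt_of_le (Real.exp_pos 16) hu16
  have hL16 : (16 : ℝ) ≤ L := by
    have h := Real.log_le_log (Real.exp_pos 16) hu16
    rwa [Real.log_exp] at h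
  have hL0 : (0 : ℝ) < L := by linarith
  have he81 : (81 : ℝ) ≤ Real.exp 16 := by
    have h1 : (9 : ℝ) ≤ Real.exp 8 := by nlinarith [Real.add_one_le_exp (8:ℝ)]
    have h2 : Real.exp 16 = Real.exp 8 * Real.exp 8 := by rw [← Real.exp_add]; norm_num
    nlinarith [h1, h2]
  have hu4L : 4 * L ≤ u := by
    have h1 : Real.log (u / Real.exp 16) = L - 16 := by
      rw [Real.log_div (ne_of_gt hu0) (ne_of_gt (Real.exp_pos _)), Real.log_exp, hLdef]
    have h2 : Real.log (u / Real.exp 16) ≤ u / Real.exp 16 - 1 :=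
      Real.log_le_sub_one_of_pos (by positivity)
    rw [h1] at h2
    have h3 : (L - 16) * Real.exp 16 ≤ u - Real.exp 16 := by
      have h4 := mul_le_mul_of_nonneg_right h2 (Real.exp_pos 16).le
      have h5 : (u / Real.exp 16 - 1) * Real.exp 16 = u - Real.exp 16 := by
        field_simp
      linarith [h5.le, h5.ge]
    nlinarith only [h3, he81, hu16, mul_nonneg (sub_nonneg.2 hu16) (sub_nonneg.2 he81), Real.exp_pos 16]
  have h4mL : 4 * (L * m) ≤ (n : ℝ) ^ 2 := by
    have h1 := hu4L
    rw [hudef, le_div_iff₀ hm0] at h1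
    linarith only [h1]
  have hs0 : (0 : ℝ) < s := by
    rw [hsdef]
    exact Real.sqrt_pos.2 (by positivity)
  have hss : s * s = (m : ℝ) * L := by
    rw [hsdef]; exact Real.mul_self_sqrt (by positivity)
  have hx2 : (2 : ℝ) ≤ (n : ℝ) / s := by
    rw [le_div_iff₀ hs0]
    have e2 : (2:ℝ) * s = Real.sqrt (4 * ((m:ℝ) * L)) := by
      rw [hsdef, Real.sqrt_mul (by norm_num : (0:ℝ) ≤ 4),
        show Real.sqrt (4:ℝ) = 2 by
          rw [show (4:ℝ) = 2^2 by norm_num, Real.sqrt_sq (by norm_num : (0:ℝ) ≤ 2)]]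
    rw [e2]
    calc Real.sqrt (4 * ((m:ℝ) * L)) ≤ Real.sqrt ((n:ℝ)^2) :=
          Real.sqrt_le_sqrt (by linarith only [h4mL])
      _ = n := Real.sqrt_sq hn0.le
  have hx0 : (0 : ℝ) < (n : ℝ) / s := by linarith
  have hxsq : ((n : ℝ) / s) ^ 2 = u / L := by
    rw [div_pow, hsdef, Real.sq_sqrt (by positivity : (0:ℝ) ≤ (m:ℝ) * L), hudef]
    field_simp
  have hlogx : Real.log ((n : ℝ) / s) ≤ L / 2 := by
    have h1 : Real.log (((n : ℝ) / s) ^ 2) = 2 * Real.log ((n : ℝ) / s) := by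
      rw [Real.log_pow]; norm_num
    have h2 : u / L ≤ u := div_le_self hu0.le (by linarith)
    have h3 : Real.log (u / L) ≤ L := by
      conv_rhs => rw [hLdef]
      exact Real.log_le_log (by positivity) h2
    have h4 : Real.log (((n : ℝ) / s) ^ 2) ≤ L := by rw [hxsq]; exact h3
    linarith
  have hlogx0 : (0 : ℝ) ≤ Real.log ((n : ℝ) / s) := Real.log_nonneg (by linarith)
  constructor
  · exact_mod_cast nsplit_le_scard n m ℓ
  · have hbase : (1 / 6 : ℝ) * n / s = ((n : ℝ) / s) / 6 := by ring
    rw [ge_iff_le, hbase]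
    rcases le_or_gt (m : ℝ) L with hcase | hcase
    · -- CASE A : m ≤ L, ℓ = 1
      have hl1 : ℓ = 1 := by
        rw [hldef, Nat.ceil_eq_iff one_ne_zero]
        constructor
        · simpa using Real.sqrt_pos.2 (by positivity : (0:ℝ) < (m : ℝ) / L)
        · simpa using Real.sqrt_le_one.2 ((div_le_one hL0).2 hcase)
      have hsn4 : (4 : ℝ) ≤ Real.sqrt n := by
        rw [show (4:ℝ) = Real.sqrt 16 by
          rw [show (16:ℝ) = 4^2 by norm_num, Real.sqrt_sq (by norm_num : (0:ℝ) ≤ 4)]]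
        exact Real.sqrt_le_sqrt (by linarith)
      have hLn : L ≤ (n : ℝ) - 4 := by
        have hun2 : u ≤ (n : ℝ) ^ 2 := by
          rw [hudef]; exact div_le_self (by positivity) (by linarith)
        have h1 : L ≤ Real.log ((n : ℝ) ^ 2) := by
          rw [hLdef]; exact Real.log_le_log hu0 hun2
        have h2 : Real.log ((n : ℝ) ^ 2) = 2 * Real.log n := by
          rw [Real.log_pow]; norm_num
        have h3 : Real.log (n : ℝ) = 2 * Real.log (Real.sqrt n) := by
          conv_lhs => rw [← Real.sq_sqrt hn0.le]
          rw [Real.log_pow]; norm_num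
        have h4 : Real.log (Real.sqrt n) ≤ Real.sqrt n - 1 :=
          Real.log_le_sub_one_of_pos (Real.sqrt_pos.2 hn0)
        have h5 : Real.sqrt (n:ℝ) * Real.sqrt (n:ℝ) = n := Real.mul_self_sqrt hn0.le
        nlinarith only [h1, h2, h3, h4, h5, hsn4,
          mul_nonneg (Real.sqrt_nonneg (n:ℝ)) (by linarith only [hsn4] : (0:ℝ) ≤ Real.sqrt (n:ℝ) - 4)]
      have hmn : m + 4 ≤ n := by
        have h : (m : ℝ) + 4 ≤ n := by linarith
        exact_mod_cast h
      have hmn1 : m ≤ n - 1 := by omega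
      have hNe : Nsplit n m ℓ = (n - 1).choose m := by
        rw [hl1, Nsplit_eq n m 1 (by omega)
          (by rw [Nat.choose_eq_zero_of_lt (by norm_num)]; exact Nat.zero_le m)]
        rw [one_mul, Nat.choose_eq_zero_of_lt (by norm_num : 1 < 2), Nat.sub_zero]
      rw [hNe]
      have hsm : (m : ℝ) ≤ s := by
        rw [hsdef]
        calc (m:ℝ) = Real.sqrt ((m:ℝ) * m) := by rw [Real.sqrt_mul_self hm0.le]
          _ ≤ Real.sqrt ((m:ℝ) * L) := Real.sqrt_le_sqrt (mul_le_mul_of_nonneg_left hcase hm0.le)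
      have hcast : ((n - 1 : ℕ) : ℝ) = (n : ℝ) - 1 := by
        have h : (1:ℕ) ≤ n := by omega
        push_cast [h]
        ring
      have hbb : ((n : ℝ) / s) / 6 ≤ ((n - 1 : ℕ) : ℝ) / m := by
        rw [hcast]
        have b1 : (n : ℝ) / s / 6 ≤ (n : ℝ) / s / 2 :=
          div_le_div_of_nonneg_left hx0.le (by norm_num) (by norm_num)
        have b2 : (n : ℝ) / s ≤ (n : ℝ) / m :=
          div_le_div_of_nonneg_left hn0.le hm0 hsm
        have b3 : (n : ℝ) / s / 2 ≤ (n : ℝ) / m / 2 := by linarith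
        have b4 : (n : ℝ) / m / 2 ≤ ((n:ℝ) - 1) / m := by
          rw [div_div, div_le_div_iff₀ (by positivity) hm0]
          nlinarith only [hm0, hn100, mul_nonneg (by linarith only [hn100] : (0:ℝ) ≤ (n:ℝ) - 2) hm0.le]
        linarith
      calc ((n:ℝ)/s/6)^m ≤ (((n-1:ℕ):ℝ)/m)^m := pow_le_pow_left₀ (by positivity) hbb m
        _ ≤ ((n-1).choose m : ℝ) := div_pow_le_choose (n-1) m hmn1
    · -- CASE B : L < m
      have hsq1 : (1:ℝ) ≤ Real.sqrt ((m:ℝ)/L) := Real.one_le_sqrt.2 ((one_le_div hL0).2 hcase.le)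
      have hl_lb : Real.sqrt ((m:ℝ)/L) ≤ (ℓ:ℝ) := by rw [hldef]; exact Nat.le_ceil _
      have hl_ub : (ℓ:ℝ) ≤ 2 * Real.sqrt ((m:ℝ)/L) := by
        have h := Nat.ceil_lt_add_one (Real.sqrt_nonneg ((m:ℝ)/L))
        rw [hldef]
        linarith
      have hsq : Real.sqrt ((m:ℝ)/L) ^ 2 = (m:ℝ)/L := Real.sq_sqrt (by positivity)
      have hl2 : (ℓ:ℝ)^2 ≤ 4 * ((m:ℝ)/L) := by
        nlinarith only [hl_ub, hsq, Real.sqrt_nonneg ((m:ℝ)/L), (Nat.cast_nonneg ℓ : (0:ℝ) ≤ (ℓ:ℕ))]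
      have hch2 : ℓ.choose 2 * 2 = ℓ * (ℓ - 1) := by
        rw [Nat.choose_two_right]
        rcases Nat.even_mul_pred_self ℓ with ⟨t, ht⟩
        omega
      have hC2 : ((ℓ.choose 2 : ℕ) : ℝ) ≤ 2 * (m:ℝ) / L := by
        have h1 : ℓ.choose 2 * 2 ≤ ℓ * ℓ := by
          rw [hch2]; exact Nat.mul_le_mul_left ℓ (Nat.sub_le ℓ 1)
        have h3 : ((ℓ.choose 2 : ℕ) : ℝ) * 2 ≤ (ℓ:ℝ) * ℓ := by exact_mod_cast h1
        have h4 : ((ℓ.choose 2 : ℕ) : ℝ) ≤ 2 * ((m:ℝ)/L) := by nlinarith only [h3, hl2]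
        rw [mul_div_assoc]
        exact h4
      have hC2m : ((ℓ.choose 2 : ℕ) : ℝ) ≤ (m:ℝ)/8 := by
        have h1 : 2 * (m:ℝ) / L ≤ 2 * (m:ℝ) / 16 :=
          div_le_div_of_nonneg_left (by positivity) (by norm_num) hL16
        linarith
      have hC2N : ℓ.choose 2 ≤ m := by
        have h : ((ℓ.choose 2 : ℕ) : ℝ) ≤ (m : ℝ) := by linarith
        exact_mod_cast h
      have hbcast : ((m - ℓ.choose 2 : ℕ) : ℝ) = (m:ℝ) - ((ℓ.choose 2 : ℕ) : ℝ) := by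
        push_cast [hC2N]
        ring
      have hb1 : 1 ≤ m - ℓ.choose 2 := by
        have h2 : (1:ℝ) ≤ ((m - ℓ.choose 2 : ℕ):ℝ) := by rw [hbcast]; linarith
        exact_mod_cast h2
      have hsqm : Real.sqrt ((m:ℝ)/L) ≤ Real.sqrt (m:ℝ) / 4 := by
        rw [show Real.sqrt (m:ℝ) / 4 = Real.sqrt ((m:ℝ)/16) by
          rw [Real.sqrt_div hm0.le, show Real.sqrt (16:ℝ) = 4 by
            rw [show (16:ℝ) = 4^2 by norm_num, Real.sqrt_sq (by norm_num : (0:ℝ) ≤ 4)]]]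
        exact Real.sqrt_le_sqrt (div_le_div_of_nonneg_left hm0.le (by norm_num) hL16)
      have hsqn : Real.sqrt (m:ℝ) ≤ (n:ℝ)/2 := by
        rw [show (n:ℝ)/2 = Real.sqrt (((n:ℝ)/2)^2) from (Real.sqrt_sq (by positivity)).symm]
        exact Real.sqrt_le_sqrt (by nlinarith only [hm4])
      have hln2 : (ℓ:ℝ) ≤ (n:ℝ)/2 := by
        calc (ℓ:ℝ) ≤ 2 * Real.sqrt ((m:ℝ)/L) := hl_ub
          _ ≤ 2 * (Real.sqrt (m:ℝ)/4) := by linarith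
          _ = Real.sqrt (m:ℝ)/2 := by ring
          _ ≤ (n:ℝ)/4 := by linarith
          _ ≤ (n:ℝ)/2 := by linarith
      have hlnN : ℓ ≤ n := by
        have h : (ℓ:ℝ) ≤ (n:ℝ) := by linarith
        exact_mod_cast h
      have hacast : ((ℓ * (n - ℓ) : ℕ) : ℝ) = (ℓ:ℝ) * ((n:ℝ) - ℓ) := by
        push_cast [hlnN]
        ring
      have hsmL : s = Real.sqrt (m:ℝ) * Real.sqrt L := by rw [hsdef, Real.sqrt_mul hm0.le]
      have hsqd : Real.sqrt ((m:ℝ)/L) = Real.sqrt (m:ℝ) / Real.sqrt L := Real.sqrt_div hm0.le L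
      have hmm : Real.sqrt (m:ℝ) * Real.sqrt (m:ℝ) = (m:ℝ) := Real.mul_self_sqrt hm0.le
      have hsL0 : (0:ℝ) < Real.sqrt L := Real.sqrt_pos.2 hL0
      have hsm0 : (0:ℝ) < Real.sqrt (m:ℝ) := Real.sqrt_pos.2 hm0
      have e1 : (n:ℝ)/s/2 * m = Real.sqrt ((m:ℝ)/L) * ((n:ℝ)/2) := by
        rw [hsmL, hsqd]
        field_simp
        linear_combination (-1 : ℝ) * hmm
      have hble : m - ℓ.choose 2 ≤ m := Nat.sub_le _ _
      have hx21 : (1:ℝ) ≤ (n:ℝ)/s/2 := by linarith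
      have hab : (n:ℝ)/s/2 * ((m - ℓ.choose 2 : ℕ):ℝ) ≤ ((ℓ * (n - ℓ) : ℕ):ℝ) := by
        have h1 : (n:ℝ)/s/2 * ((m - ℓ.choose 2 : ℕ):ℝ) ≤ (n:ℝ)/s/2 * m := by
          apply mul_le_mul_of_nonneg_left _ (by linarith)
          exact_mod_cast Nat.cast_le.2 hble
        rw [e1] at h1
        have h2 : Real.sqrt ((m:ℝ)/L) * ((n:ℝ)/2) ≤ ((ℓ * (n - ℓ) : ℕ):ℝ) := by
          rw [hacast]
          have h3 : (n:ℝ)/2 ≤ (n:ℝ) - ℓ := by linarith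
          exact mul_le_mul hl_lb h3 (by linarith) (by linarith)
        linarith
      have hbpos : (0:ℝ) < ((m - ℓ.choose 2 : ℕ):ℝ) := by
        have h : (0:ℕ) < m - ℓ.choose 2 := hb1
        exact_mod_cast h
      have hba : m - ℓ.choose 2 ≤ ℓ * (n - ℓ) := by
        have h1 : ((m - ℓ.choose 2 : ℕ):ℝ) ≤ ((ℓ * (n - ℓ) : ℕ):ℝ) := by
          have h6 := mul_le_mul_of_nonneg_right hx21 hbpos.le
          rw [one_mul] at h6
          linarith only [hab, h6]
        exact_mod_cast h1
      have hxb : (n:ℝ)/s/2 ≤ ((ℓ*(n-ℓ):ℕ):ℝ) / ((m - ℓ.choose 2:ℕ):ℝ) :=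
        (le_div_iff₀ hbpos).2 hab
      have hklog : ((ℓ.choose 2:ℕ):ℝ) * Real.log ((n:ℝ)/s) ≤ m := by
        have h1 : ((ℓ.choose 2:ℕ):ℝ) * Real.log ((n:ℝ)/s) ≤ (2*(m:ℝ)/L) * Real.log ((n:ℝ)/s) :=
          mul_le_mul_of_nonneg_right hC2 hlogx0
        have h2 : (2*(m:ℝ)/L) * Real.log ((n:ℝ)/s) ≤ (2*(m:ℝ)/L) * (L/2) :=
          mul_le_mul_of_nonneg_left hlogx (by positivity)
        have h3 : (2*(m:ℝ)/L) * (L/2) = m := by field_simp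
        linarith
      have hpk : ((n:ℝ)/s/2) ^ (ℓ.choose 2) ≤ (3:ℝ) ^ m := by
        have h1 : ((n:ℝ)/s/2) ^ (ℓ.choose 2) ≤ ((n:ℝ)/s) ^ (ℓ.choose 2) :=
          pow_le_pow_left₀ (by linarith) (by linarith) _
        have h2 : ((n:ℝ)/s) ^ (ℓ.choose 2) = Real.exp (((ℓ.choose 2:ℕ):ℝ) * Real.log ((n:ℝ)/s)) := by
          rw [Real.exp_nat_mul, Real.exp_log hx0]
        have h3 : Real.exp (((ℓ.choose 2:ℕ):ℝ) * Real.log ((n:ℝ)/s)) ≤ Real.exp m :=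
          Real.exp_le_exp.2 hklog
        have h4 : Real.exp (m:ℝ) ≤ (3:ℝ)^m := by
          have h5 : Real.exp (m:ℝ) = Real.exp 1 ^ m := by
            rw [← Real.exp_nat_mul, mul_one]
          rw [h5]
          exact pow_le_pow_left₀ (Real.exp_pos 1).le (by linarith [Real.exp_one_lt_d9]) m
        calc ((n:ℝ)/s/2) ^ (ℓ.choose 2) ≤ ((n:ℝ)/s) ^ (ℓ.choose 2) := h1
          _ = Real.exp (((ℓ.choose 2:ℕ):ℝ) * Real.log ((n:ℝ)/s)) := h2
          _ ≤ Real.exp (m:ℝ) := h3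
          _ ≤ (3:ℝ)^m := h4
      have hfinal3 : ((n:ℝ)/s/6)^m ≤ ((n:ℝ)/s/2)^(m - ℓ.choose 2) := by
        have h0 : (0:ℝ) < ((n:ℝ)/s/2) ^ (ℓ.choose 2) := pow_pos (by linarith) _
        have h1 : ((n:ℝ)/s/6) = ((n:ℝ)/s/2)/3 := by ring
        rw [h1, div_pow]
        have h2 : ((n:ℝ)/s/2)^m / (3:ℝ)^m ≤ ((n:ℝ)/s/2)^m / ((n:ℝ)/s/2)^(ℓ.choose 2) :=
          div_le_div_of_nonneg_left (by positivity) h0 hpk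
        have h3 : ((n:ℝ)/s/2)^m / ((n:ℝ)/s/2)^(ℓ.choose 2) = ((n:ℝ)/s/2)^(m - ℓ.choose 2) := by
          rw [pow_sub₀ _ (by linarith : ((n:ℝ)/s/2) ≠ 0) hC2N, div_eq_mul_inv]
        linarith
      rw [Nsplit_eq n m ℓ hlnN hC2N]
      calc ((n:ℝ)/s/6)^m ≤ ((n:ℝ)/s/2)^(m - ℓ.choose 2) := hfinal3
        _ ≤ (((ℓ*(n-ℓ):ℕ):ℝ) / ((m - ℓ.choose 2:ℕ):ℝ))^(m - ℓ.choose 2) :=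
            pow_le_pow_left₀ (by linarith) hxb _
        _ ≤ ((ℓ*(n-ℓ)).choose (m - ℓ.choose 2) : ℝ) :=
            div_pow_le_choose _ _ hba
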